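/- Let Q be a unital quantale with unit e. Define on the opposite lattice Q^op the zero multiplication c₁·c₂ = 0, the Q-actions a·c' = (a → c)' and c'·a = (c ← a)' (where a → c = ⋁{x : x·a ≤ c} and c ← a = ⋁{x : a·x ≤ c}), and φ = 0 (the constant bottom map). Then (Q^op, Q, φ) is a couple of quantales, and the element e' ∈ Q^op is a cyclic dualizing element; in particular, for every a ∈ Q, a → e' computed in this couple equals a' (the element a viewed in Q^op). -/

import Mathlib

/-- A quantale: a complete lattice with an associative multiplication
distributing over arbitrary joins in both variables. -/
class Quantale' (α : Type*) extends CompleteLattice α, Mul α where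
  mul_assoc : ∀ a b c : α, a * b * c = a * (b * c)
  mul_sSup : ∀ (a : α) (s : Set α), a * sSup s = ⨆ b ∈ s, a * b
  sSup_mul : ∀ (s : Set α) (a : α), sSup s * a = ⨆ b ∈ s, b * a

/-- A couple of quantales: a quantale `Q`, a quantale `C` which is also a
`Q`-bimodule, and a coupling map `φ : C → Q` which is a join-preserving
`Q`-bimodule homomorphism satisfying `φ(c₁)·c₂ = c₁·φ(c₂) = c₁·c₂`. -/
structure Couple (C Q : Type*) [Quantale' C] [Quantale' Q] where
  φ : C → Q
  /-- the left action of `Q` on `C` -/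
  act : Q → C → C
  /-- the right action of `Q` on `C` -/
  actr : C → Q → C
  act_sSup : ∀ (a : Q) (s : Set C), act a (sSup s) = ⨆ c ∈ s, act a c
  sSup_act : ∀ (s : Set Q) (c : C), act (sSup s) c = ⨆ a ∈ s, act a c
  actr_sSup : ∀ (c : C) (s : Set Q), actr c (sSup s) = ⨆ a ∈ s, actr c a
  sSup_actr : ∀ (s : Set C) (a : Q), actr (sSup s) a = ⨆ c ∈ s, actr c a
  act_mul : ∀ (a b : Q) (c : C), act (a * b) c = act a (act b c)
  actr_mul : ∀ (c : C) (a b : Q), actr c (a * b) = actr (actr c a) b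
  act_actr : ∀ (a : Q) (c : C) (b : Q), actr (act a c) b = act a (actr c b)
  φ_sSup : ∀ s : Set C, φ (sSup s) = ⨆ c ∈ s, φ c
  φ_act : ∀ (a : Q) (c : C), φ (act a c) = a * φ c
  φ_actr : ∀ (c : C) (a : Q), φ (actr c a) = φ c * a
  couple_left : ∀ c₁ c₂ : C, act (φ c₁) c₂ = c₁ * c₂
  couple_right : ∀ c₁ c₂ : C, actr c₁ (φ c₂) = c₁ * c₂

/-- A Girard couple: a couple together with a cyclic dualizing element `d ∈ C`. -/
structure GirardCouple (C Q : Type*) [Quantale' C] [Quantale' Q] extends Couple C Q where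
  d : C
  cyclic : ∀ (a : Q) (c : C), act a c ≤ d ↔ actr c a ≤ d
  /-- `d ⧸ (a → d) = a` for `a ∈ Q` -/
  dualizing_Q₁ : ∀ a : Q, sSup {b : Q | act b (sSup {c : C | actr c a ≤ d}) ≤ d} = a
  /-- `(d ⧸ a) → d = a` for `a ∈ Q` -/
  dualizing_Q₂ : ∀ a : Q, sSup {b : Q | actr (sSup {c : C | act a c ≤ d}) b ≤ d} = a
  /-- `d ⧸ (c → d) = c` for `c ∈ C` -/
  dualizing_C₁ : ∀ c : C, sSup {c' : C | act (sSup {a : Q | actr c a ≤ d}) c' ≤ d} = c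
  /-- `(d ⧸ c) → d = c` for `c ∈ C` -/
  dualizing_C₂ : ∀ c : C, sSup {c' : C | actr c' (sSup {a : Q | act a c ≤ d}) ≤ d} = c

/-- The opposite lattice of a quantale, equipped with the zero multiplication. -/
instance opZeroQuantale {Q : Type*} [Quantale' Q] : Quantale' Qᵒᵈ where
  __ := (inferInstance : CompleteLattice Qᵒᵈ)
  mul := fun _ _ => ⊥
  mul_assoc := fun _ _ _ => rfl
  mul_sSup := by
    intro a s; show (⊥ : Qᵒᵈ) = ⨆ b ∈ s, (⊥ : Qᵒᵈ); simp
  sSup_mul := by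
    intro s a; show (⊥ : Qᵒᵈ) = ⨆ b ∈ s, (⊥ : Qᵒᵈ); simp


namespace Stmt4Aux
variable {Q : Type*} [Quantale' Q]

theorem mul_le_mul_right' {x y : Q} (h : x ≤ y) (a : Q) : x * a ≤ y * a := by
  have h1 : sSup ({x, y} : Set Q) = y := by rw [sSup_pair, sup_eq_right.mpr h]
  have h2 := Quantale'.sSup_mul ({x, y} : Set Q) a
  rw [h1] at h2
  rw [h2]
  exact le_iSup₂ (f := fun b (_ : b ∈ ({x,y}:Set Q)) => b * a) x (by simp)

theorem mul_le_mul_left' {x y : Q} (h : x ≤ y) (a : Q) : a * x ≤ a * y := by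
  have h1 : sSup ({x, y} : Set Q) = y := by rw [sSup_pair, sup_eq_right.mpr h]
  have h2 := Quantale'.mul_sSup a ({x, y} : Set Q)
  rw [h1] at h2
  rw [h2]
  exact le_iSup₂ (f := fun b (_ : b ∈ ({x,y}:Set Q)) => a * b) x (by simp)

/-- right residual: `r a c = a → c`, largest `x` with `x*a ≤ c`. -/
noncomputable def r (a c : Q) : Q := sSup {x : Q | x * a ≤ c}
noncomputable def l (a c : Q) : Q := sSup {x : Q | a * x ≤ c}

theorem le_r_iff {x a c : Q} : x ≤ r a c ↔ x * a ≤ c := by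
  constructor
  · intro h
    calc x * a ≤ r a c * a := mul_le_mul_right' h a
    _ ≤ c := by
        rw [r, Quantale'.sSup_mul]
        exact iSup₂_le fun b hb => hb
  · exact fun h => le_sSup h

theorem le_l_iff {x a c : Q} : x ≤ l a c ↔ a * x ≤ c := by
  constructor
  · intro h
    calc a * x ≤ a * l a c := mul_le_mul_left' h a
    _ ≤ c := by
        rw [l, Quantale'.mul_sSup]
        exact iSup₂_le fun b hb => hb
  · exact fun h => le_sSup h

theorem mul_bot (a : Q) : a * (⊥ : Q) = ⊥ := by
  have := Quantale'.mul_sSup a (∅ : Set Q)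
  simpa using this

theorem bot_mul (a : Q) : (⊥ : Q) * a = ⊥ := by
  have := Quantale'.sSup_mul (∅ : Set Q) a
  simpa using this

theorem ext_le {α : Type*} [PartialOrder α] {x y : α} (h : ∀ z, x ≤ z ↔ y ≤ z) : x = y :=
  le_antisymm ((h y).mpr le_rfl) ((h x).mp le_rfl)

noncomputable def act0 (a : Q) (c : Qᵒᵈ) : Qᵒᵈ := OrderDual.toDual (r a (OrderDual.ofDual c))
noncomputable def actr0 (c : Qᵒᵈ) (a : Q) : Qᵒᵈ := OrderDual.toDual (l a (OrderDual.ofDual c))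

theorem act0_le_iff {a : Q} {c z : Qᵒᵈ} :
    act0 a c ≤ z ↔ OrderDual.ofDual z * a ≤ OrderDual.ofDual c := by
  rw [show (act0 a c ≤ z) ↔ OrderDual.ofDual z ≤ r a (OrderDual.ofDual c) from Iff.rfl]
  exact le_r_iff

theorem actr0_le_iff {a : Q} {c z : Qᵒᵈ} :
    actr0 c a ≤ z ↔ a * OrderDual.ofDual z ≤ OrderDual.ofDual c := by
  rw [show (actr0 c a ≤ z) ↔ OrderDual.ofDual z ≤ l a (OrderDual.ofDual c) from Iff.rfl]
  exact le_l_iff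

theorem sSup_dual_upper (a : Q) :
    sSup {c : Qᵒᵈ | a ≤ OrderDual.ofDual c} = OrderDual.toDual a := by
  apply le_antisymm
  · exact sSup_le fun c hc => hc
  · exact le_sSup (le_rfl : a ≤ a)

theorem le_ofDual_sSup_iff {w : Q} {s : Set Qᵒᵈ} :
    w ≤ OrderDual.ofDual (sSup s) ↔ ∀ i ∈ s, w ≤ OrderDual.ofDual i :=
  ⟨fun h i hi => h.trans (le_sSup hi), fun h => sSup_le fun i hi => h i hi⟩

theorem sSup_Iic' (a : Q) : sSup {b : Q | b ≤ a} = a :=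
  le_antisymm (sSup_le fun _ hb => hb) (le_sSup le_rfl)

end Stmt4Aux


/-- For a unital quantale `Q` with unit `e`, the opposite lattice `Qᵒᵈ` with the
zero multiplication, the residuation actions `a·c' = (a → c)'`, `c'·a = (c ← a)'`
and the zero coupling map form a Girard couple with cyclic dualizing element `e'`;
in particular `a → e' = a'` for every `a`. -/
theorem stmt4 {Q : Type*} [Quantale' Q] (e : Q)
    (he : ∀ a : Q, a * e = a ∧ e * a = a) :
    ∃ gc : GirardCouple Qᵒᵈ Q,
      gc.φ = (fun _ => (⊥ : Q)) ∧
      gc.act = (fun a c => OrderDual.toDual (sSup {x : Q | x * a ≤ OrderDual.ofDual c})) ∧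
      gc.actr = (fun c a => OrderDual.toDual (sSup {x : Q | a * x ≤ OrderDual.ofDual c})) ∧
      gc.d = OrderDual.toDual e ∧
      ∀ a : Q, sSup {c : Qᵒᵈ | gc.actr c a ≤ gc.d} = OrderDual.toDual a := by
  classical
  open Stmt4Aux in
  have hact : ∀ (b : Q) (c : Qᵒᵈ),
      act0 b c ≤ OrderDual.toDual e ↔ b ≤ OrderDual.ofDual c := by
    intro b c
    rw [act0_le_iff]
    simp [(he b).2]
  have hactr : ∀ (b : Q) (c : Qᵒᵈ),
      actr0 c b ≤ OrderDual.toDual e ↔ b ≤ OrderDual.ofDual c := by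
    intro b c
    rw [actr0_le_iff]
    simp [(he b).1]
  have hsupQ : ∀ a : Q, sSup {b : Q | b ≤ a} = a := fun a => sSup_Iic' a
  have hA : ∀ a : Q, {c : Qᵒᵈ | actr0 c a ≤ OrderDual.toDual e}
      = {c : Qᵒᵈ | a ≤ OrderDual.ofDual c} := fun a => Set.ext fun c => hactr a c
  have hB : ∀ a : Q, {c : Qᵒᵈ | act0 a c ≤ OrderDual.toDual e}
      = {c : Qᵒᵈ | a ≤ OrderDual.ofDual c} := fun a => Set.ext fun c => hact a c
  refine ⟨{
    φ := fun _ => (⊥ : Q)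
    act := act0
    actr := actr0
    act_sSup := ?_
    sSup_act := ?_
    actr_sSup := ?_
    sSup_actr := ?_
    act_mul := ?_
    actr_mul := ?_
    act_actr := ?_
    φ_sSup := by intro s; simp
    φ_act := fun a _ => (mul_bot a).symm
    φ_actr := fun _ a => (bot_mul a).symm
    couple_left := ?_
    couple_right := ?_
    d := OrderDual.toDual e
    cyclic := fun a c => (hact a c).trans (hactr a c).symm
    dualizing_Q₁ := ?_
    dualizing_Q₂ := ?_
    dualizing_C₁ := ?_
    dualizing_C₂ := ?_ }, rfl, rfl, rfl, rfl, ?_⟩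
  · -- act_sSup
    intro a s
    apply ext_le; intro z
    rw [act0_le_iff, iSup₂_le_iff]
    simp only [act0_le_iff]
    exact le_ofDual_sSup_iff
  · -- sSup_act
    intro s c
    apply ext_le; intro z
    rw [act0_le_iff, iSup₂_le_iff]
    simp only [act0_le_iff]
    rw [Quantale'.mul_sSup, iSup₂_le_iff]
  · -- actr_sSup  : actr0 c (sSup s) = ⨆ a ∈ s, actr0 c a
    intro c s
    apply ext_le; intro z
    rw [actr0_le_iff, iSup₂_le_iff]
    simp only [actr0_le_iff]
    rw [Quantale'.sSup_mul, iSup₂_le_iff]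
  · -- sSup_actr : actr0 (sSup s) a = ⨆ c ∈ s, actr0 c a
    intro s a
    apply ext_le; intro z
    rw [actr0_le_iff, iSup₂_le_iff]
    simp only [actr0_le_iff]
    exact le_ofDual_sSup_iff
  · -- act_mul
    intro a b c
    apply ext_le; intro z
    rw [act0_le_iff, act0_le_iff]
    rw [show (OrderDual.ofDual (act0 b c) : Q) = r b (OrderDual.ofDual c) from rfl]
    rw [le_r_iff, Quantale'.mul_assoc]
  · -- actr_mul
    intro c a b
    apply ext_le; intro z
    rw [actr0_le_iff, actr0_le_iff]
    rw [show (OrderDual.ofDual (actr0 c a) : Q) = l a (OrderDual.ofDual c) from rfl]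
    rw [le_l_iff, ← Quantale'.mul_assoc]
  · -- act_actr
    intro a c b
    apply ext_le; intro z
    rw [actr0_le_iff, act0_le_iff]
    rw [show (OrderDual.ofDual (act0 a c) : Q) = r a (OrderDual.ofDual c) from rfl,
        show (OrderDual.ofDual (actr0 c b) : Q) = l b (OrderDual.ofDual c) from rfl]
    rw [le_r_iff, le_l_iff, Quantale'.mul_assoc]
  · -- couple_left
    intro c₁ c₂
    apply ext_le; intro z
    constructor
    · intro _; exact bot_le
    · intro _
      rw [act0_le_iff, mul_bot]
      exact bot_le
  · -- couple_right
    intro c₁ c₂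
    apply ext_le; intro z
    constructor
    · intro _; exact bot_le
    · intro _
      rw [actr0_le_iff, bot_mul]
      exact bot_le
  · -- dualizing_Q₁
    intro a
    rw [hA a, sSup_dual_upper a]
    have : {b : Q | act0 b (OrderDual.toDual a) ≤ OrderDual.toDual e} = {b : Q | b ≤ a} :=
      Set.ext fun b => hact b (OrderDual.toDual a)
    rw [this, hsupQ]
  · -- dualizing_Q₂
    intro a
    rw [hB a, sSup_dual_upper a]
    have : {b : Q | actr0 (OrderDual.toDual a) b ≤ OrderDual.toDual e} = {b : Q | b ≤ a} :=
      Set.ext fun b => hactr b (OrderDual.toDual a)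
    rw [this, hsupQ]
  · -- dualizing_C₁
    intro c
    have h1 : {a : Q | actr0 c a ≤ OrderDual.toDual e} = {a : Q | a ≤ OrderDual.ofDual c} :=
      Set.ext fun a => hactr a c
    rw [h1, hsupQ]
    rw [hB (OrderDual.ofDual c), sSup_dual_upper]
    rfl
  · -- dualizing_C₂
    intro c
    have h1 : {a : Q | act0 a c ≤ OrderDual.toDual e} = {a : Q | a ≤ OrderDual.ofDual c} :=
      Set.ext fun a => hact a c
    rw [h1, hsupQ]
    rw [hA (OrderDual.ofDual c), sSup_dual_upper]
    rfl
  · -- final claim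
    intro a
    rw [show ({c : Qᵒᵈ | actr0 c a ≤ OrderDual.toDual e}) = {c : Qᵒᵈ | a ≤ OrderDual.ofDual c}
        from hA a, sSup_dual_upper]
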